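/- Composition of simulations: if f : R → T is a simulation (cut-off Δ_f, shift Γ_f, degeneracy d_f, encodings of order k₁) and g : S → R is a simulation (cut-off Δ_g, shift Γ_g, degeneracy d_g, encodings of order k₂), then there is a simulation g∘f : S → T with cut-off min(Δ_f, Δ_g − Γ_f), shift Γ_f + Γ_g, degeneracy d_f · d_g, physical spin assignment P_{g∘f}^{(m,n)} = P_g^{(m)} ∘ P_f^{(n)}, decoding dec_{g∘f}(x₁,...,x_{k₁}) = dec_f(dec_g(x₁),...,dec_g(x_{k₁})), and encodings (enc_{g∘f})_{i,j}^{(m,n)} = (enc_g)_i^{(m)} ∘ (enc_f)_j^{(n)}. Moreover, (sim_{g∘f})_{i,j}(t) = {s ∈ (sim_g)_i(r) : r ∈ (sim_f)_j(t)}. -/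

import Mathlib

/-- A spin system, abstracted to its (finite) set of spins, spin type and Hamiltonian. -/
structure SpinSys where
  V : Type
  fintypeV : Fintype V
  decV : DecidableEq V
  q : ℕ
  two_le_q : 2 ≤ q
  H : (V → Fin q) → ℝ
  H_nonneg : ∀ s, 0 ≤ H s

attribute [instance] SpinSys.fintypeV SpinSys.decV

/-- The configuration space of a spin system. -/
abbrev SpinSys.Config (S : SpinSys) : Type := S.V → Fin S.q

/-- A simulation of the target spin system `T` by the source spin system `S`.
`K` indexes the physical spins of a single target spin (the order of the encoding),
`M` indexes the encodings (the size of the encoding). -/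
structure Simulation (S T : SpinSys) (K M : Type) [Fintype K] [Fintype M] where
  /-- the cut-off -/
  Δ : ℝ
  /-- the energy shift -/
  Γ : ℝ
  /-- the degeneracy -/
  d : ℕ
  /-- the physical spin assignment -/
  P : T.V → K → S.V
  /-- the decoding -/
  dec : (K → Fin S.q) → Fin T.q
  /-- the encodings -/
  enc : M → Fin T.q → (K → Fin S.q)
  /-- disjoint physical spins -/
  P_disjoint : ∀ v w i j, P v i = P w j → v = w ∧ i = j
  /-- decode-encode compatibility -/
  dec_enc : ∀ i x, dec (enc i x) = x
  /-- disjoint encodings -/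
  enc_disjoint : ∀ i j x, enc i x = enc j x → i = j
  /-- constant local degeneracy -/
  deg : ∀ (i : M) (t : T.V → Fin T.q), T.H t < Δ →
    Set.ncard {s : S.V → Fin S.q |
      (∀ v, (fun j => s (P v j)) = enc i (t v)) ∧ S.H s - Γ < Δ} = d
  /-- matching energies, low-energy case -/
  low : ∀ (t : T.V → Fin T.q) (s : S.V → Fin S.q) (i : M),
    (∀ v, (fun j => s (P v j)) = enc i (t v)) → S.H s - Γ < Δ → S.H s - Γ = T.H t
  /-- matching energies, high-energy case -/
  high : ∀ s : S.V → Fin S.q,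
    (∀ (t : T.V → Fin T.q) (i : M),
      ¬ ((∀ v, (fun j => s (P v j)) = enc i (t v)) ∧ S.H s - Γ < Δ)) →
    Δ ≤ S.H s - Γ

namespace Simulation

variable {S T : SpinSys} {K M : Type} [Fintype K] [Fintype M]

/-- The set of source configurations simulating `t` via the `i`-th encoding. -/
def simI (f : Simulation S T K M) (i : M) (t : T.Config) : Set S.Config :=
  {s | (∀ v, (fun j => s (f.P v j)) = f.enc i (t v)) ∧ S.H s - f.Γ < f.Δ}

/-- The set of source configurations simulating `t`. -/
def sim (f : Simulation S T K M) (t : T.Config) : Set S.Config :=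
  ⋃ i : M, f.simI i t

/-- Decoding a source configuration into a target configuration. -/
def decode (f : Simulation S T K M) (s : S.Config) : T.Config :=
  fun v => f.dec (fun j => s (f.P v j))

end Simulation


section Aux

variable {S R T : SpinSys}
    {K₁ M₁ K₂ M₂ : Type} [Fintype K₁] [Fintype M₁] [Fintype K₂] [Fintype M₂]

/-- Two target configs simulated by the same source config via the same encoding agree. -/
lemma simI_unique (g : Simulation S R K₂ M₂) (i : M₂) (r r' : R.Config) (s : S.Config)
    (h1 : s ∈ g.simI i r) (h2 : s ∈ g.simI i r') : r = r' := by
  funext w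
  have h := (h1.1 w).symm.trans (h2.1 w)
  have h' := congrArg g.dec h
  rwa [g.dec_enc, g.dec_enc] at h'

/-- Forward direction: a low-energy composite-simulating config factors through `R`. -/
lemma comp_key (hTV : Nonempty T.V) (hK₁ : Nonempty K₁)
    (f : Simulation R T K₁ M₁) (g : Simulation S R K₂ M₂)
    (i : M₂) (j : M₁) (t : T.Config) (s : S.Config)
    (hc : ∀ v (p : K₂ × K₁), s (g.P (f.P v p.2) p.1) = g.enc i (f.enc j (t v) p.2) p.1)
    (he : S.H s - (f.Γ + g.Γ) < min f.Δ (g.Δ - f.Γ)) :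
    ∃ r ∈ f.simI j t, s ∈ g.simI i r := by
  have hg : S.H s - g.Γ < g.Δ := by
    have := lt_of_lt_of_le he (min_le_right _ _); linarith
  have hex : ¬ ∀ (r : R.Config) (i' : M₂),
      ¬ ((∀ w, (fun m => s (g.P w m)) = g.enc i' (r w)) ∧ S.H s - g.Γ < g.Δ) := by
    intro hall
    exact absurd (g.high s hall) (not_le.2 hg)
  push_neg at hex
  obtain ⟨r, i', hr, hre⟩ := hex
  have hcomp : ∀ v n, r (f.P v n) = f.enc j (t v) n := by
    intro v n
    have h1 : g.enc i' (r (f.P v n)) = g.enc i (f.enc j (t v) n) := by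
      funext m
      calc g.enc i' (r (f.P v n)) m = s (g.P (f.P v n) m) := (congrFun (hr _) m).symm
        _ = g.enc i (f.enc j (t v) n) m := hc v (m, n)
    have h2 := congrArg g.dec h1
    rwa [g.dec_enc, g.dec_enc] at h2
  have hii : i' = i := by
    obtain ⟨v⟩ := hTV; obtain ⟨n⟩ := hK₁
    refine g.enc_disjoint i' i (f.enc j (t v) n) ?_
    funext m
    calc g.enc i' (f.enc j (t v) n) m
        = g.enc i' (r (f.P v n)) m := by rw [hcomp]
      _ = s (g.P (f.P v n) m) := (congrFun (hr _) m).symm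
      _ = g.enc i (f.enc j (t v) n) m := hc v (m, n)
  have hRE : S.H s - g.Γ = R.H r := g.low r s i' hr hre
  have hf : S.H s - (f.Γ + g.Γ) < f.Δ := lt_of_lt_of_le he (min_le_left _ _)
  refine ⟨r, ⟨fun v => funext (hcomp v), by linarith⟩, ?_, hre⟩
  rw [← hii]; exact hr

/-- Backward direction: factoring through `R` gives a composite-simulating config. -/
lemma comp_key2 (f : Simulation R T K₁ M₁) (g : Simulation S R K₂ M₂)
    (i : M₂) (j : M₁) (t : T.Config) (s : S.Config) (r : R.Config)
    (hr : r ∈ f.simI j t) (hs : s ∈ g.simI i r) :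
    (∀ v (p : K₂ × K₁), s (g.P (f.P v p.2) p.1) = g.enc i (f.enc j (t v) p.2) p.1) ∧
      S.H s - (f.Γ + g.Γ) < min f.Δ (g.Δ - f.Γ) := by
  obtain ⟨hrc, hre⟩ := hr
  obtain ⟨hsc, hse⟩ := hs
  have hRE : S.H s - g.Γ = R.H r := g.low r s i hsc hse
  constructor
  · intro v p
    calc s (g.P (f.P v p.2) p.1) = g.enc i (r (f.P v p.2)) p.1 := congrFun (hsc _) p.1
      _ = g.enc i (f.enc j (t v) p.2) p.1 := by rw [congrFun (hrc v) p.2]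
  · exact lt_min (by linarith) (by linarith)

end Aux

/-- composition of simulations: from `f : R → T` and `g : S → R` one
obtains a simulation `g∘f : S → T` with cut-off `min(Δ_f, Δ_g − Γ_f)`, shift
`Γ_f + Γ_g`, degeneracy `d_f·d_g`, composite physical spin assignment, decoding and
encodings, and simulation assignment
`(sim_{g∘f})_{i,j}(t) = {s ∈ (sim_g)_i(r) : r ∈ (sim_f)_j(t)}`. -/
theorem composition_of_simulations {S R T : SpinSys}
    {K₁ M₁ K₂ M₂ : Type} [Fintype K₁] [Fintype M₁] [Fintype K₂] [Fintype M₂]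
    (hTV : Nonempty T.V) (hK₁ : Nonempty K₁)
    (f : Simulation R T K₁ M₁) (g : Simulation S R K₂ M₂) :
    ∃ h : Simulation S T (K₂ × K₁) (M₂ × M₁),
      h.Δ = min f.Δ (g.Δ - f.Γ) ∧
      h.Γ = f.Γ + g.Γ ∧
      h.d = f.d * g.d ∧
      (∀ v p, h.P v p = g.P (f.P v p.2) p.1) ∧
      (∀ x, h.dec x = f.dec fun n => g.dec fun m => x (m, n)) ∧
      (∀ i x p, h.enc i x p = g.enc i.1 (f.enc i.2 x p.2) p.1) ∧
      (∀ (i : M₂ × M₁) (t : T.Config),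
        h.simI i t = {s | ∃ r ∈ f.simI i.2 t, s ∈ g.simI i.1 r}) := by
  classical
  refine ⟨{
      Δ := min f.Δ (g.Δ - f.Γ)
      Γ := f.Γ + g.Γ
      d := f.d * g.d
      P := fun v p => g.P (f.P v p.2) p.1
      dec := fun x => f.dec fun n => g.dec fun m => x (m, n)
      enc := fun i x p => g.enc i.1 (f.enc i.2 x p.2) p.1
      P_disjoint := ?_
      dec_enc := ?_
      enc_disjoint := ?_
      deg := ?_
      low := ?_
      high := ?_ }, rfl, rfl, rfl, fun _ _ => rfl, fun _ => rfl, fun _ _ _ => rfl, ?_⟩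
  · -- P_disjoint
    intro v w p p' h
    obtain ⟨h1, h2⟩ := g.P_disjoint _ _ _ _ h
    obtain ⟨h3, h4⟩ := f.P_disjoint _ _ _ _ h1
    exact ⟨h3, Prod.ext h2 h4⟩
  · -- dec_enc
    intro i x
    simp only [g.dec_enc, f.dec_enc]
  · -- enc_disjoint
    intro i i' x h
    obtain ⟨n⟩ := hK₁
    have hj : i.2 = i'.2 := by
      refine f.enc_disjoint _ _ x ?_
      funext n'
      have h1 : g.enc i.1 (f.enc i.2 x n') = g.enc i'.1 (f.enc i'.2 x n') := by
        funext m
        exact congrFun h (m, n')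
      have h2 := congrArg g.dec h1
      rwa [g.dec_enc, g.dec_enc] at h2
    have hi : i.1 = i'.1 := by
      refine g.enc_disjoint _ _ (f.enc i.2 x n) ?_
      funext m
      have := congrFun h (m, n)
      simpa [hj] using this
    exact Prod.ext hi hj
  · -- deg
    intro i t ht
    have htf : T.H t < f.Δ := lt_of_lt_of_le ht (min_le_left _ _)
    have htg : T.H t < g.Δ - f.Γ := lt_of_lt_of_le ht (min_le_right _ _)
    have hset : {s : S.V → Fin S.q |
        (∀ v, (fun p : K₂ × K₁ => s (g.P (f.P v p.2) p.1)) =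
          fun p => g.enc i.1 (f.enc i.2 (t v) p.2) p.1) ∧
        S.H s - (f.Γ + g.Γ) < min f.Δ (g.Δ - f.Γ)} =
        ⋃ r ∈ f.simI i.2 t, g.simI i.1 r := by
      ext s
      simp only [Set.mem_setOf_eq, Set.mem_iUnion]
      constructor
      · rintro ⟨hc, he⟩
        obtain ⟨r, hr, hs⟩ := comp_key hTV hK₁ f g i.1 i.2 t s
          (fun v p => congrFun (hc v) p) he
        exact ⟨r, hr, hs⟩
      · rintro ⟨r, hr, hs⟩
        obtain ⟨h1, h2⟩ := comp_key2 f g i.1 i.2 t s r hr hs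
        exact ⟨fun v => funext (h1 v), h2⟩
    show Set.ncard _ = f.d * g.d
    rw [hset]
    have hAfin : (f.simI i.2 t).Finite := Set.toFinite _
    have hBfin : ∀ r : R.Config, (g.simI i.1 r).Finite := fun r => Set.toFinite _
    have hU : (⋃ r ∈ f.simI i.2 t, g.simI i.1 r) =
        ↑(hAfin.toFinset.biUnion fun r => (hBfin r).toFinset) := by
      ext s
      simp only [Set.mem_iUnion, Finset.coe_biUnion, Set.Finite.coe_toFinset,
        Finset.mem_coe, Set.Finite.mem_toFinset, exists_prop]
    rw [hU, Set.ncard_coe_finset, Finset.card_biUnion]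
    · have hcst : ∀ r ∈ hAfin.toFinset, ((hBfin r).toFinset).card = g.d := by
        intro r hr
        rw [Set.Finite.mem_toFinset] at hr
        rw [← Set.ncard_eq_toFinset_card _ (hBfin r)]
        apply g.deg
        have := f.low t r i.2 hr.1 hr.2
        linarith
      have hd : (f.simI i.2 t).ncard = f.d := f.deg i.2 t htf
      rw [Finset.sum_congr rfl hcst, Finset.sum_const, smul_eq_mul,
        ← Set.ncard_eq_toFinset_card _ hAfin, hd]
    · intro r hr r' hr' hne
      rw [Function.onFun, Finset.disjoint_left]
      intro s hs hs'
      rw [Set.Finite.mem_toFinset] at hs hs'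
      exact hne (simI_unique g i.1 r r' s hs hs')
  · -- low
    intro t s i hc he
    obtain ⟨r, hr, hs⟩ := comp_key hTV hK₁ f g i.1 i.2 t s
      (fun v p => congrFun (hc v) p) he
    have h1 := g.low r s i.1 hs.1 hs.2
    have h2 := f.low t r i.2 hr.1 hr.2
    linarith
  · -- high
    intro s hnot
    by_contra hlt
    push_neg at hlt
    have hg : S.H s - g.Γ < g.Δ := by
      have := lt_of_lt_of_le hlt (min_le_right _ _); linarith
    have hex : ¬ ∀ (r : R.Config) (i' : M₂),
        ¬ ((∀ w, (fun m => s (g.P w m)) = g.enc i' (r w)) ∧ S.H s - g.Γ < g.Δ) := by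
      intro hall
      exact absurd (g.high s hall) (not_le.2 hg)
    push_neg at hex
    obtain ⟨r, i', hr, hre⟩ := hex
    have hRE : S.H s - g.Γ = R.H r := g.low r s i' hr hre
    have hfR : R.H r - f.Γ < f.Δ := by
      have := lt_of_lt_of_le hlt (min_le_left _ _); linarith
    have hex2 : ¬ ∀ (t : T.Config) (j : M₁),
        ¬ ((∀ v, (fun n => r (f.P v n)) = f.enc j (t v)) ∧ R.H r - f.Γ < f.Δ) := by
      intro hall
      exact absurd (f.high r hall) (not_le.2 hfR)
    push_neg at hex2
    obtain ⟨t, j, htc, hte⟩ := hex2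
    refine hnot t (i', j) ⟨?_, hlt⟩
    intro v
    funext p
    calc s (g.P (f.P v p.2) p.1) = g.enc i' (r (f.P v p.2)) p.1 := congrFun (hr _) p.1
      _ = g.enc i' (f.enc j (t v) p.2) p.1 := by rw [congrFun (htc v) p.2]
  · -- simI characterization
    intro i t
    ext s
    simp only [Simulation.simI, Set.mem_setOf_eq]
    constructor
    · rintro ⟨hc, he⟩
      obtain ⟨r, hr, hs⟩ := comp_key hTV hK₁ f g i.1 i.2 t s
        (fun v p => congrFun (hc v) p) he
      exact ⟨r, hr, hs⟩
    · rintro ⟨r, hr, hs⟩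
      obtain ⟨h1, h2⟩ := comp_key2 f g i.1 i.2 t s r hr hs
      exact ⟨fun v => funext (h1 v), h2⟩
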